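/- arXiv:1902.06496 — 5 statements merged into one kernel-verified Lean document; each statement's English description precedes it below -/
import Mathlib

section
/- Let A be a real n×n matrix that is Hurwitz stable, i.e. every complex eigenvalue of A has negative real part. Then the linear map X ↦ A X + X Aᵀ on real n×n matrices is injective: if A X + X Aᵀ = 0 then X = 0. Consequently, for every real n×n matrix F the Lyapunov equation A J + J Aᵀ = −F has at most one solution J. -/
open Matrix Polynomial

private lemma lyap_pow_comm {n : ℕ} (M N Y : Matrix (Fin n) (Fin n) ℂ)
    (h : M * Y = Y * N) : ∀ k : ℕ, M ^ k * Y = Y * N ^ k := by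
  intro k
  induction k with
  | zero => simp
  | succ k ih =>
    rw [pow_succ, pow_succ, mul_assoc, h, ← mul_assoc, ih, mul_assoc]

private lemma lyap_aeval_comm {n : ℕ} (M N Y : Matrix (Fin n) (Fin n) ℂ)
    (h : M * Y = Y * N) (p : ℂ[X]) :
    (aeval M) p * Y = Y * (aeval N) p := by
  induction p using Polynomial.induction_on' with
  | add p q hp hq => simp [map_add, add_mul, mul_add, hp, hq]
  | monomial k c =>
    rw [aeval_monomial, aeval_monomial, mul_assoc, lyap_pow_comm M N Y h k,
      ← mul_assoc, Algebra.commutes c Y, mul_assoc]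

private lemma lyap_isUnit_aeval {n : ℕ} (B : Matrix (Fin n) (Fin n) ℂ) :
    ∀ (N : ℕ) (p : ℂ[X]), p.natDegree ≤ N → p ≠ 0 →
      (∀ r : ℂ, p.IsRoot r → IsUnit ((aeval B) (X - C r))) →
      IsUnit ((aeval B) p) := by
  intro N
  induction N with
  | zero =>
    intro p hdeg hp _
    have hc : p = C (p.coeff 0) := Polynomial.eq_C_of_natDegree_le_zero hdeg
    have hc0 : p.coeff 0 ≠ 0 := fun h0 => hp (by rw [hc, h0, map_zero])
    rw [hc, aeval_C]
    exact (isUnit_iff_ne_zero.mpr hc0).map (algebraMap ℂ _)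
  | succ N ih =>
    intro p hdeg hp hroots
    by_cases h0 : p.natDegree = 0
    · exact ih p (by omega) hp hroots
    · have hdpos : 0 < p.degree := by
        exact Polynomial.natDegree_pos_iff_degree_pos.mp (Nat.pos_of_ne_zero h0)
      obtain ⟨r, hr⟩ := Complex.exists_root hdpos
      obtain ⟨q, hq⟩ := (Polynomial.dvd_iff_isRoot.mpr hr)
      have hq0 : q ≠ 0 := fun h => hp (by rw [hq, h, mul_zero])
      have hXC : (X - C r : ℂ[X]) ≠ 0 := Polynomial.X_sub_C_ne_zero r
      have hdq : q.natDegree ≤ N := by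
        have := Polynomial.natDegree_mul hXC hq0
        rw [← hq, Polynomial.natDegree_X_sub_C] at this
        omega
      have hqroots : ∀ s : ℂ, q.IsRoot s → IsUnit ((aeval B) (X - C s)) := by
        intro s hs
        exact hroots s (by rw [hq]; simpa [Polynomial.IsRoot, eval_mul] using Or.inr hs)
      rw [hq, _root_.map_mul]
      exact (hroots r hr).mul (ih q hdq hq0 hqroots)

/-- For a Hurwitz stable real matrix `A`, the Lyapunov operator
`X ↦ A X + X Aᵀ` is injective; consequently, for every `F` the Lyapunov equation
`A J + J Aᵀ = −F` has at most one solution. -/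
theorem lyapunov_uniqueness
    (n : ℕ) (A : Matrix (Fin n) (Fin n) ℝ)
    (hA : ∀ μ : ℂ, (A.map Complex.ofReal).charpoly.IsRoot μ → μ.re < 0) :
    (∀ X : Matrix (Fin n) (Fin n) ℝ, A * X + X * Aᵀ = 0 → X = 0) ∧
    ∀ F J J' : Matrix (Fin n) (Fin n) ℝ,
      A * J + J * Aᵀ = -F → A * J' + J' * Aᵀ = -F → J = J' := by
  have main : ∀ X : Matrix (Fin n) (Fin n) ℝ, A * X + X * Aᵀ = 0 → X = 0 := by
    intro X hX
    set A' : Matrix (Fin n) (Fin n) ℂ := A.map Complex.ofReal with hA'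
    set X' : Matrix (Fin n) (Fin n) ℂ := X.map Complex.ofReal with hX'
    -- complexified equation
    have hC : A' * X' + X' * A'ᵀ = 0 := by
      have := congrArg (fun M : Matrix (Fin n) (Fin n) ℝ =>
        (Complex.ofRealHom.mapMatrix : Matrix (Fin n) (Fin n) ℝ →+* Matrix (Fin n) (Fin n) ℂ) M) hX
      simp [RingHom.mapMatrix_apply, Matrix.map_add, Matrix.transpose_map] at this; exact this
    set B : Matrix (Fin n) (Fin n) ℂ := -A'ᵀ with hB
    have hcomm : A' * X' = X' * B := by
      rw [hB, Matrix.mul_neg]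
      rw [add_eq_zero_iff_eq_neg] at hC
      exact hC
    set p : ℂ[X] := A'.charpoly with hp
    have hCH : (aeval A') p = 0 := Matrix.aeval_self_charpoly A'
    have hkey : X' * (aeval B) p = 0 := by
      rw [← lyap_aeval_comm A' B X' hcomm p, hCH, zero_mul]
    have hpne : p ≠ 0 := (Matrix.charpoly_monic A').ne_zero
    have hunit : IsUnit ((aeval B) p) := by
      apply lyap_isUnit_aeval B p.natDegree p le_rfl hpne
      intro r hr
      have haev : (aeval B) (Polynomial.X - C r) = B - scalar (Fin n) r := by
        rw [map_sub, aeval_X, aeval_C]; rfl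
      rw [haev, Matrix.isUnit_iff_isUnit_det, isUnit_iff_ne_zero]
      have htr : B - scalar (Fin n) r = (scalar (Fin n) (-r) - A')ᵀ := by
        ext i j
        by_cases hij : i = j
        all_goals simp [hB, Matrix.scalar, Matrix.diagonal, hij, eq_comm, Matrix.sub_apply,
            Matrix.neg_apply, Matrix.transpose_apply] <;> ring
      rw [htr, Matrix.det_transpose]
      have heval : p.eval (-r) = (scalar (Fin n) (-r) - A').det := by
        rw [hp, Matrix.charpoly, eval_det, matPolyEquiv_charmatrix]; simp
      rw [← heval]
      intro h0
      have h1 : (-r).re < 0 := hA (-r) h0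
      have h2 : r.re < 0 := hA r hr
      simp only [Complex.neg_re] at h1
      linarith
    have hX'0 : X' = 0 := by
      have : X' * (aeval B) p = 0 * (aeval B) p := by rw [hkey, zero_mul]
      exact hunit.mul_right_cancel this
    ext i j
    have := congrFun (congrFun hX'0 i) j
    simpa [hX', Matrix.map_apply] using Complex.ofReal_eq_zero.mp this
  refine ⟨main, fun F J J' h1 h2 => ?_⟩
  have h3 : A * (J - J') + (J - J') * Aᵀ = 0 := by
    rw [Matrix.mul_sub, Matrix.sub_mul]
    have h4 : A * J + J * Aᵀ - (A * J' + J' * Aᵀ) = 0 := by rw [h1, h2]; simp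
    calc A * J - A * J' + (J * Aᵀ - J' * Aᵀ)
        = A * J + J * Aᵀ - (A * J' + J' * Aᵀ) := by abel
      _ = 0 := h4
  exact sub_eq_zero.mp (main (J - J') h3)
end

section
/- Let d be a positive integer and let Γ₁ = diag(λ₁,…,λ_d) and Γ₂ = diag(μ₁,…,μ_d) be real diagonal d×d matrices with 0 < λ_j < μ_j for each j. Let Γ = diag(Γ₁, Γ₂) ∈ ℝ^{2d×2d} be the block-diagonal matrix, let Σ ∈ ℝ^{2d×d} be the block matrix with upper block −Γ₁Γ₂(Γ₂−Γ₁)^{−1} and lower block Γ₂²(Γ₂−Γ₁)^{−1}, and let M ∈ ℝ^{2d×2d} be the symmetric block matrix with blocks M¹¹ = ½Γ₁Γ₂²(Γ₁−Γ₂)^{−2}, M¹² = M²¹ = −Γ₁Γ₂³(Γ₁+Γ₂)^{−1}(Γ₁−Γ₂)^{−2}, and M²² = ½Γ₂³(Γ₁−Γ₂)^{−2}. Then M satisfies the Lyapunov equation Γ M + M Γᵀ = Σ Σᵀ. -/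
open Matrix

private lemma diag_inv {d : ℕ} (v : Fin d → ℝ) (hv : ∀ i, v i ≠ 0) :
    (Matrix.diagonal v)⁻¹ = Matrix.diagonal (fun i => (v i)⁻¹) :=
  inv_eq_right_inv (by rw [diagonal_mul_diagonal]; simp [mul_inv_cancel₀, hv])

/-- The block matrix `M` with blocks `M¹¹ = ½Γ₁Γ₂²(Γ₁−Γ₂)⁻²`,
`M¹² = M²¹ = −Γ₁Γ₂³(Γ₁+Γ₂)⁻¹(Γ₁−Γ₂)⁻²`, `M²² = ½Γ₂³(Γ₁−Γ₂)⁻²` solves the Lyapunov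
equation `ΓM + MΓᵀ = ΣΣᵀ` for `Γ = diag(Γ₁,Γ₂)` and `Σ` with blocks
`−Γ₁Γ₂(Γ₂−Γ₁)⁻¹` and `Γ₂²(Γ₂−Γ₁)⁻¹`, where `Γ₁ = diag(λ)`, `Γ₂ = diag(μ)` with
`0 < λⱼ < μⱼ`. -/
theorem block_gramian_lyapunov
    (d : ℕ) (hd : 0 < d) (lam mu : Fin d → ℝ)
    (hpos : ∀ j, 0 < lam j) (hlt : ∀ j, lam j < mu j)
    (Γ₁ Γ₂ : Matrix (Fin d) (Fin d) ℝ)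
    (hΓ₁ : Γ₁ = Matrix.diagonal lam) (hΓ₂ : Γ₂ = Matrix.diagonal mu)
    (Γ : Matrix (Fin d ⊕ Fin d) (Fin d ⊕ Fin d) ℝ)
    (hΓ : Γ = Matrix.fromBlocks Γ₁ 0 0 Γ₂)
    (Sig : Matrix (Fin d ⊕ Fin d) (Fin d) ℝ)
    (hSig : Sig = Matrix.fromRows (-(Γ₁ * Γ₂ * (Γ₂ - Γ₁)⁻¹)) (Γ₂ ^ 2 * (Γ₂ - Γ₁)⁻¹))
    (M : Matrix (Fin d ⊕ Fin d) (Fin d ⊕ Fin d) ℝ)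
    (hM : M = Matrix.fromBlocks
      ((1 / 2 : ℝ) • (Γ₁ * Γ₂ ^ 2 * ((Γ₁ - Γ₂)⁻¹) ^ 2))
      (-(Γ₁ * Γ₂ ^ 3 * (Γ₁ + Γ₂)⁻¹ * ((Γ₁ - Γ₂)⁻¹) ^ 2))
      (-(Γ₁ * Γ₂ ^ 3 * (Γ₁ + Γ₂)⁻¹ * ((Γ₁ - Γ₂)⁻¹) ^ 2))
      ((1 / 2 : ℝ) • (Γ₂ ^ 3 * ((Γ₁ - Γ₂)⁻¹) ^ 2))) :
    Γ * M + M * Γᵀ = Sig * Sigᵀ := by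
  subst hΓ₁ hΓ₂ hΓ hSig hM
  have h1 : ∀ j, mu j - lam j ≠ 0 := fun j => sub_ne_zero.2 (hlt j).ne'
  have h2 : ∀ j, lam j - mu j ≠ 0 := fun j => sub_ne_zero.2 (hlt j).ne
  have h3 : ∀ j, lam j + mu j ≠ 0 :=
    fun j => (add_pos (hpos j) ((hpos j).trans (hlt j))).ne'
  rw [show (Matrix.diagonal mu - Matrix.diagonal lam)⁻¹
        = Matrix.diagonal (fun j => (mu j - lam j)⁻¹) by
      rw [diagonal_sub, diag_inv _ h1],
    show (Matrix.diagonal lam - Matrix.diagonal mu)⁻¹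
        = Matrix.diagonal (fun j => (lam j - mu j)⁻¹) by
      rw [diagonal_sub, diag_inv _ h2],
    show (Matrix.diagonal lam + Matrix.diagonal mu)⁻¹
        = Matrix.diagonal (fun j => (lam j + mu j)⁻¹) by
      rw [diagonal_add, diag_inv _ h3]]
  simp only [transpose_fromRows, fromRows_mul_fromCols, fromBlocks_transpose,
    diagonal_transpose, transpose_zero, diagonal_pow, diagonal_mul_diagonal,
    diagonal_neg, transpose_neg, transpose_mul, smul_eq_diagonal_mul,
    Matrix.neg_mul, Matrix.mul_neg, fromBlocks_multiply, fromBlocks_add,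
    Matrix.zero_mul, Matrix.mul_zero, add_zero, zero_add, neg_neg]
  rw [fromBlocks_inj]
  refine ⟨?_, ?_, ?_, ?_⟩ <;>
  · simp only [diagonal_mul_diagonal, diagonal_neg, diagonal_add, ← diagonal_neg]
    refine congrArg Matrix.diagonal (funext fun j => ?_)
    have := h1 j; have := h2 j; have := h3 j
    simp only [Pi.pow_apply]
    field_simp
    ring
end

section
/- Let d, p be positive integers, let Γ₁ = diag(λ₁,…,λ_d) and Γ₂ = diag(μ₁,…,μ_d) be real diagonal d×d matrices with 0 < λ_j < μ_j for each j, and let B be a real p×d matrix. Let Γ = diag(Γ₁, Γ₂) ∈ ℝ^{2d×2d}, C = [B B] ∈ ℝ^{p×2d}, and let M ∈ ℝ^{2d×2d} be the symmetric block matrix with blocks M¹¹ = ½Γ₁Γ₂²(Γ₁−Γ₂)^{−2}, M¹² = M²¹ = −Γ₁Γ₂³(Γ₁+Γ₂)^{−1}(Γ₁−Γ₂)^{−2}, M²² = ½Γ₂³(Γ₁−Γ₂)^{−2}. Then for every t ∈ ℝ, C exp(−|t|Γ) M Cᵀ = ½ B Γ₂²(Γ₂² − Γ₁²)^{−1}(Γ₂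 e^{−Γ₂|t|} − Γ₁ e^{−Γ₁|t|}) Bᵀ, where e^{−Γ_i|t|} denotes the matrix exponential of −|t|Γ_i. -/
open Matrix

lemma exp_smul_diagonal {n : Type*} [Fintype n] [DecidableEq n] (s : ℝ) (v : n → ℝ) :
    NormedSpace.exp (s • Matrix.diagonal v) =
      Matrix.diagonal (fun j => Real.exp (s * v j)) := by
  rw [← Matrix.diagonal_smul, Matrix.exp_diagonal]
  have : NormedSpace.exp (s • v) = fun j => Real.exp (s * v j) := by
    funext j
    rw [Pi.coe_exp, Pi.smul_apply, smul_eq_mul, Real.exp_eq_exp_ℝ]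
  rw [this]

lemma inv_diagonal_ne {n : Type*} [Fintype n] [DecidableEq n] (v : n → ℝ)
    (h : ∀ i, v i ≠ 0) :
    (Matrix.diagonal v)⁻¹ = Matrix.diagonal (fun i => (v i)⁻¹) := by
  apply Matrix.inv_eq_right_inv
  rw [Matrix.diagonal_mul_diagonal]
  have : (fun i => v i * (v i)⁻¹) = fun _ => (1 : ℝ) := by
    funext i; exact mul_inv_cancel₀ (h i)
  rw [this, Matrix.diagonal_one]

lemma key_diag {d : ℕ} (s : ℝ) (lam mu : Fin d → ℝ)
    (hab : ∀ j, lam j - mu j ≠ 0) (hapb : ∀ j, lam j + mu j ≠ 0)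
    (hsq : ∀ j, mu j ^ 2 - lam j ^ 2 ≠ 0) :
    Matrix.diagonal (fun j => Real.exp (s * lam j)) *
        ((1 / 2 : ℝ) • (Matrix.diagonal lam * Matrix.diagonal mu ^ 2 *
          ((Matrix.diagonal lam - Matrix.diagonal mu)⁻¹) ^ 2)) +
      Matrix.diagonal (fun j => Real.exp (s * mu j)) *
        (-(Matrix.diagonal lam * Matrix.diagonal mu ^ 3 *
          (Matrix.diagonal lam + Matrix.diagonal mu)⁻¹ *
          ((Matrix.diagonal lam - Matrix.diagonal mu)⁻¹) ^ 2)) +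
      (Matrix.diagonal (fun j => Real.exp (s * lam j)) *
        (-(Matrix.diagonal lam * Matrix.diagonal mu ^ 3 *
          (Matrix.diagonal lam + Matrix.diagonal mu)⁻¹ *
          ((Matrix.diagonal lam - Matrix.diagonal mu)⁻¹) ^ 2)) +
       Matrix.diagonal (fun j => Real.exp (s * mu j)) *
        ((1 / 2 : ℝ) • (Matrix.diagonal mu ^ 3 *
          ((Matrix.diagonal lam - Matrix.diagonal mu)⁻¹) ^ 2))) =
    (1 / 2 : ℝ) • (Matrix.diagonal mu ^ 2 *
      (Matrix.diagonal mu ^ 2 - Matrix.diagonal lam ^ 2)⁻¹ *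
      (Matrix.diagonal mu * Matrix.diagonal (fun j => Real.exp (s * mu j)) -
        Matrix.diagonal lam * Matrix.diagonal (fun j => Real.exp (s * lam j)))) := by
  have i1 : (Matrix.diagonal lam - Matrix.diagonal mu)⁻¹ =
      Matrix.diagonal (fun i => (lam i - mu i)⁻¹) := by
    rw [Matrix.diagonal_sub]; exact inv_diagonal_ne _ hab
  have i2 : (Matrix.diagonal lam + Matrix.diagonal mu)⁻¹ =
      Matrix.diagonal (fun i => (lam i + mu i)⁻¹) := by
    rw [Matrix.diagonal_add]; exact inv_diagonal_ne _ hapb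
  have i3 : (Matrix.diagonal mu ^ 2 - Matrix.diagonal lam ^ 2)⁻¹ =
      Matrix.diagonal (fun i => (mu i ^ 2 - lam i ^ 2)⁻¹) := by
    rw [Matrix.diagonal_pow, Matrix.diagonal_pow, Matrix.diagonal_sub]
    exact inv_diagonal_ne _ (fun i => by simpa using hsq i)
  rw [i1, i2, i3]
  simp only [Matrix.mul_smul, Matrix.mul_neg, Matrix.diagonal_pow,
    Matrix.diagonal_mul_diagonal]
  ext i j
  by_cases h : i = j
  · subst h
    simp only [Matrix.add_apply, Matrix.sub_apply, Matrix.neg_apply, Matrix.smul_apply,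
      Matrix.diagonal_apply_eq, smul_eq_mul, Pi.mul_apply, Pi.pow_apply, Pi.inv_apply,
      Pi.add_apply, Pi.sub_apply, Matrix.diagonal_sub, Matrix.diagonal_mul_diagonal]
    have h1 := hab i; have h2 := hapb i; have h3 := hsq i
    field_simp
    ring
  · simp [Matrix.diagonal_apply_ne _ h, Matrix.diagonal_sub]

/-- Bi-exponential closed form of the memory kernel realized by the
triple `(Γ, M, C)` with `Γ = diag(Γ₁,Γ₂)`, `C = [B B]` and the Gramian `M`:
`C exp(−|t|Γ) M Cᵀ = ½ B Γ₂²(Γ₂² − Γ₁²)⁻¹(Γ₂e^{−Γ₂|t|} − Γ₁e^{−Γ₁|t|}) Bᵀ`. -/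
theorem block_kernel_biexponential_form
    (d p : ℕ) (lam mu : Fin d → ℝ)
    (hpos : ∀ j, 0 < lam j) (hlt : ∀ j, lam j < mu j)
    (B : Matrix (Fin p) (Fin d) ℝ)
    (Γ₁ Γ₂ : Matrix (Fin d) (Fin d) ℝ)
    (hΓ₁ : Γ₁ = Matrix.diagonal lam) (hΓ₂ : Γ₂ = Matrix.diagonal mu)
    (Γ : Matrix (Fin d ⊕ Fin d) (Fin d ⊕ Fin d) ℝ)
    (hΓ : Γ = Matrix.fromBlocks Γ₁ 0 0 Γ₂)
    (C : Matrix (Fin p) (Fin d ⊕ Fin d) ℝ)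
    (hC : C = Matrix.fromCols B B)
    (M : Matrix (Fin d ⊕ Fin d) (Fin d ⊕ Fin d) ℝ)
    (hM : M = Matrix.fromBlocks
      ((1 / 2 : ℝ) • (Γ₁ * Γ₂ ^ 2 * ((Γ₁ - Γ₂)⁻¹) ^ 2))
      (-(Γ₁ * Γ₂ ^ 3 * (Γ₁ + Γ₂)⁻¹ * ((Γ₁ - Γ₂)⁻¹) ^ 2))
      (-(Γ₁ * Γ₂ ^ 3 * (Γ₁ + Γ₂)⁻¹ * ((Γ₁ - Γ₂)⁻¹) ^ 2))
      ((1 / 2 : ℝ) • (Γ₂ ^ 3 * ((Γ₁ - Γ₂)⁻¹) ^ 2))) :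
    ∀ t : ℝ,
      C * NormedSpace.exp ((-|t|) • Γ) * M * Cᵀ =
        (1 / 2 : ℝ) • (B * Γ₂ ^ 2 * (Γ₂ ^ 2 - Γ₁ ^ 2)⁻¹ *
          (Γ₂ * NormedSpace.exp ((-|t|) • Γ₂) - Γ₁ * NormedSpace.exp ((-|t|) • Γ₁)) *
          Bᵀ) := by
  intro t
  subst hΓ₁ hΓ₂ hΓ hC hM
  set s : ℝ := -|t| with hs
  have hEΓ : NormedSpace.exp
      (s • Matrix.fromBlocks (Matrix.diagonal lam) 0 0 (Matrix.diagonal mu)) =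
      Matrix.fromBlocks (Matrix.diagonal (fun j => Real.exp (s * lam j))) 0 0
        (Matrix.diagonal (fun j => Real.exp (s * mu j))) := by
    rw [Matrix.fromBlocks_diagonal, exp_smul_diagonal, Matrix.fromBlocks_diagonal]
    congr 1
    funext i
    cases i <;> rfl
  rw [hEΓ, exp_smul_diagonal, exp_smul_diagonal]
  rw [Matrix.fromCols_mul_fromBlocks, Matrix.fromCols_mul_fromBlocks,
    Matrix.transpose_fromCols, Matrix.fromCols_mul_fromRows]
  simp only [Matrix.mul_zero, Matrix.zero_mul, add_zero, zero_add]
  have hab : ∀ j, lam j - mu j ≠ 0 := fun j => sub_ne_zero.2 (hlt j).ne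
  have hapb : ∀ j, lam j + mu j ≠ 0 := fun j =>
    (add_pos (hpos j) ((hpos j).trans (hlt j))).ne'
  have hsq : ∀ j, mu j ^ 2 - lam j ^ 2 ≠ 0 := by
    intro j
    have := sq_lt_sq' (by nlinarith [hpos j, hlt j] : -(mu j) < lam j) (hlt j)
    exact (sub_pos.2 this).ne'
  have key := key_diag s lam mu hab hapb hsq
  set E₁ : Matrix (Fin d) (Fin d) ℝ := Matrix.diagonal (fun j => Real.exp (s * lam j))
  set E₂ : Matrix (Fin d) (Fin d) ℝ := Matrix.diagonal (fun j => Real.exp (s * mu j))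
  set D₁ : Matrix (Fin d) (Fin d) ℝ := Matrix.diagonal lam
  set D₂ : Matrix (Fin d) (Fin d) ℝ := Matrix.diagonal mu
  set M₁₁ : Matrix (Fin d) (Fin d) ℝ := (1 / 2 : ℝ) • (D₁ * D₂ ^ 2 * ((D₁ - D₂)⁻¹) ^ 2)
  set M₁₂ : Matrix (Fin d) (Fin d) ℝ := -(D₁ * D₂ ^ 3 * (D₁ + D₂)⁻¹ * ((D₁ - D₂)⁻¹) ^ 2)
  set M₂₂ : Matrix (Fin d) (Fin d) ℝ := (1 / 2 : ℝ) • (D₂ ^ 3 * ((D₁ - D₂)⁻¹) ^ 2)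
  have step1 : (B * E₁ * M₁₁ + B * E₂ * M₁₂) * Bᵀ + (B * E₁ * M₁₂ + B * E₂ * M₂₂) * Bᵀ
      = B * (E₁ * M₁₁ + E₂ * M₁₂ + (E₁ * M₁₂ + E₂ * M₂₂)) * Bᵀ := by
    simp only [Matrix.mul_add, Matrix.add_mul, Matrix.mul_assoc]
  rw [step1, key, Matrix.mul_smul, Matrix.smul_mul]
  simp only [Matrix.mul_assoc]
end

section
/- Let d, p be positive integers, let Γ₁ = diag(λ₁,…,λ_d) and Γ₂ = diag(μ₁,…,μ_d) be real diagonal d×d matrices with 0 < λ_j < μ_j for each j, and let B be a real p×d matrix. Let Γ = diag(Γ₁, Γ₂) ∈ ℝ^{2d×2d}, C = [B B] ∈ ℝ^{p×2d}, and let M ∈ ℝ^{2d×2d} be the symmetric block matrix with blocks M¹¹ = ½Γ₁Γ₂²(Γ₁−Γ₂)^{−2}, M¹² = M²¹ = −Γ₁Γ₂³(Γ₁+Γ₂)^{−1}(Γ₁−Γ₂)^{−2}, M²² = ½Γ₂³(Γ₁−Γ₂)^{−2}. Then the first order effective damping constant vanishes: C Γ^{−1} M Cᵀ = 0. -/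
open Matrix

private lemma diag_inv_aux {d : ℕ} (v : Fin d → ℝ) (hv : ∀ j, v j ≠ 0) :
    (Matrix.diagonal v)⁻¹ = Matrix.diagonal (fun j => (v j)⁻¹) := by
  apply Matrix.inv_eq_right_inv
  rw [Matrix.diagonal_mul_diagonal]
  have h : (fun i => v i * (v i)⁻¹) = fun _ => (1 : ℝ) :=
    funext fun j => mul_inv_cancel₀ (hv j)
  rw [h, Matrix.diagonal_one]

/-- Vanishing of the first order effective damping constant for the
realization `(Γ, M, C)` with `Γ = diag(Γ₁,Γ₂)`, `C = [B B]` and the Gramian `M`: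
`C Γ⁻¹ M Cᵀ = 0`. -/
theorem vanishing_effective_damping
    (d p : ℕ) (lam mu : Fin d → ℝ)
    (hpos : ∀ j, 0 < lam j) (hlt : ∀ j, lam j < mu j)
    (B : Matrix (Fin p) (Fin d) ℝ)
    (Γ₁ Γ₂ : Matrix (Fin d) (Fin d) ℝ)
    (hΓ₁ : Γ₁ = Matrix.diagonal lam) (hΓ₂ : Γ₂ = Matrix.diagonal mu)
    (Γ : Matrix (Fin d ⊕ Fin d) (Fin d ⊕ Fin d) ℝ)
    (hΓ : Γ = Matrix.fromBlocks Γ₁ 0 0 Γ₂)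
    (C : Matrix (Fin p) (Fin d ⊕ Fin d) ℝ)
    (hC : C = Matrix.fromCols B B)
    (M : Matrix (Fin d ⊕ Fin d) (Fin d ⊕ Fin d) ℝ)
    (hM : M = Matrix.fromBlocks
      ((1 / 2 : ℝ) • (Γ₁ * Γ₂ ^ 2 * ((Γ₁ - Γ₂)⁻¹) ^ 2))
      (-(Γ₁ * Γ₂ ^ 3 * (Γ₁ + Γ₂)⁻¹ * ((Γ₁ - Γ₂)⁻¹) ^ 2))
      (-(Γ₁ * Γ₂ ^ 3 * (Γ₁ + Γ₂)⁻¹ * ((Γ₁ - Γ₂)⁻¹) ^ 2))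
      ((1 / 2 : ℝ) • (Γ₂ ^ 3 * ((Γ₁ - Γ₂)⁻¹) ^ 2))) :
    C * Γ⁻¹ * M * Cᵀ = 0 := by
  subst hΓ₁ hΓ₂ hΓ hC hM
  have hl : ∀ j, lam j ≠ 0 := fun j => (hpos j).ne'
  have hm : ∀ j, mu j ≠ 0 := fun j => ((hpos j).trans (hlt j)).ne'
  have hd : ∀ j, lam j - mu j ≠ 0 := fun j => sub_ne_zero.mpr (hlt j).ne
  have hs : ∀ j, lam j + mu j ≠ 0 := fun j =>
    (add_pos (hpos j) ((hpos j).trans (hlt j))).ne'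
  -- The inverse of the block diagonal matrix
  have hGinv : (Matrix.fromBlocks (Matrix.diagonal lam) 0 0 (Matrix.diagonal mu) :
      Matrix (Fin d ⊕ Fin d) (Fin d ⊕ Fin d) ℝ)⁻¹
      = Matrix.fromBlocks (Matrix.diagonal fun j => (lam j)⁻¹) 0 0
          (Matrix.diagonal fun j => (mu j)⁻¹) := by
    apply Matrix.inv_eq_right_inv
    rw [Matrix.fromBlocks_multiply]
    simp only [Matrix.mul_zero, Matrix.zero_mul, add_zero, zero_add,
      Matrix.diagonal_mul_diagonal]
    have h1 : (fun i => lam i * (lam i)⁻¹) = fun _ => (1 : ℝ) :=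
      funext fun j => mul_inv_cancel₀ (hl j)
    have h2 : (fun i => mu i * (mu i)⁻¹) = fun _ => (1 : ℝ) :=
      funext fun j => mul_inv_cancel₀ (hm j)
    rw [h1, h2, Matrix.diagonal_one, Matrix.fromBlocks_one]
  rw [hGinv]
  set A := Matrix.diagonal lam with hA
  set D := Matrix.diagonal mu with hD
  set M11 := ((1 / 2 : ℝ) • (A * D ^ 2 * ((A - D)⁻¹) ^ 2)) with hM11
  set M12 := (-(A * D ^ 3 * (A + D)⁻¹ * ((A - D)⁻¹) ^ 2)) with hM12
  set M22 := ((1 / 2 : ℝ) • (D ^ 3 * ((A - D)⁻¹) ^ 2)) with hM22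
  set L := (Matrix.diagonal fun j => (lam j)⁻¹ : Matrix (Fin d) (Fin d) ℝ) with hL
  set U := (Matrix.diagonal fun j => (mu j)⁻¹ : Matrix (Fin d) (Fin d) ℝ) with hU
  have key : L * M11 + U * M12 + (L * M12 + U * M22) = 0 := by
    have hAD : (A - D)⁻¹ = Matrix.diagonal (fun j => (lam j - mu j)⁻¹) := by
      rw [hA, hD, Matrix.diagonal_sub, diag_inv_aux _ (fun j => hd j)]
    have hADs : (A + D)⁻¹ = Matrix.diagonal (fun j => (lam j + mu j)⁻¹) := by
      rw [hA, hD, Matrix.diagonal_add, diag_inv_aux _ (fun j => hs j)]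
    rw [hM11, hM12, hM22, hAD, hADs, hA, hD, hL, hU]
    simp only [Matrix.diagonal_pow, Matrix.diagonal_mul_diagonal,
      ← Matrix.diagonal_smul, Matrix.diagonal_neg, Matrix.diagonal_add]
    ext i j
    rcases eq_or_ne i j with rfl | hij
    · simp only [Matrix.diagonal_apply_eq, Matrix.zero_apply, Pi.smul_apply,
        Pi.mul_apply, Pi.pow_apply, smul_eq_mul]
      field_simp [hl i, hm i, hd i, hs i]
      ring
    · simp [Matrix.diagonal_apply_ne _ hij]
  calc Matrix.fromCols B B * Matrix.fromBlocks L 0 0 U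
        * Matrix.fromBlocks M11 M12 M12 M22 * (Matrix.fromCols B B)ᵀ
      = B * (L * M11 + U * M12 + (L * M12 + U * M22)) * Bᵀ := by
        rw [Matrix.transpose_fromCols, Matrix.fromCols_mul_fromBlocks,
          Matrix.fromCols_mul_fromBlocks, Matrix.fromCols_mul_fromRows]
        simp only [Matrix.mul_zero, Matrix.zero_mul, add_zero, zero_add,
          Matrix.mul_add, Matrix.add_mul, Matrix.mul_assoc]
    _ = 0 := by rw [key, Matrix.mul_zero, Matrix.zero_mul]
end

section
/- Let β, φ, m₀, γ₂, Γ₁ > 0 be constants and let σ, h : ℝ → ℝ be differentiable functions with σ(x) ≠ 0 and h(x) ≠ 0 for all x ∈ ℝ, and set g := φσ. Define, for x ∈ ℝ, S₁(x) := (2/β²)·(d/dx)(1/(g h))(x)·σ(x)²/(g(x)h(x)) − (d/dx)(1/h)(x)·4σ(x)²/(g(x)(g(x)h(x)β² + 4m₀γ₂)) + (d/dx)(σ/(g h))(x)·4σ(x)/(β²g(x)h(x) + 4m₀γ₂), and S₂(x) := −(Γ₁/β)·(d/dx)(1/g)(x)·σ(x)²/(g(x)h(x)) − (d/dx)(σ/g)(x)·2Γ₁βσ(x)/(β²g(x)h(x)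 + 4m₀γ₂). Then for all x ∈ ℝ, S₁(x) = (2/β²)·(d/dx)(1/(g h))(x)·σ(x)²/(g(x)h(x)) and S₂(x) = −(Γ₁/β)·(d/dx)(1/g)(x)·σ(x)²/(g(x)h(x)); i.e. the last two terms of S₁ cancel and the last term of S₂ vanishes, so that S₁ and S₂ do not depend on m₀ or γ₂. -/
/-- When `g = φσ` (so in particular under the fluctuation–dissipation
relation), the drift correction terms `S₁`, `S₂` of the homogenized SDE simplify: the
last two terms of `S₁` cancel and the last term of `S₂` vanishes, so `S₁` and `S₂` do
not depend on `m₀` or `γ₂`. -/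
theorem drift_terms_simplify
    (β φ m₀ γ₂ Γ₁ : ℝ) (hβ : 0 < β) (hφ : 0 < φ) (hm₀ : 0 < m₀) (hγ₂ : 0 < γ₂)
    (hΓ₁ : 0 < Γ₁)
    (σ h : ℝ → ℝ) (hσd : Differentiable ℝ σ) (hhd : Differentiable ℝ h)
    (hσ : ∀ x, σ x ≠ 0) (hh : ∀ x, h x ≠ 0)
    (g : ℝ → ℝ) (hg : g = fun x => φ * σ x)
    (hD : ∀ x, β ^ 2 * g x * h x + 4 * m₀ * γ₂ ≠ 0)
    (S₁ S₂ : ℝ → ℝ)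
    (hS₁ : S₁ = fun x =>
      (2 / β ^ 2) * deriv (fun y => 1 / (g y * h y)) x * (σ x ^ 2 / (g x * h x))
        - deriv (fun y => 1 / h y) x *
            (4 * σ x ^ 2 / (g x * (g x * h x * β ^ 2 + 4 * m₀ * γ₂)))
        + deriv (fun y => σ y / (g y * h y)) x *
            (4 * σ x / (β ^ 2 * g x * h x + 4 * m₀ * γ₂)))
    (hS₂ : S₂ = fun x =>
      -(Γ₁ / β) * deriv (fun y => 1 / g y) x * (σ x ^ 2 / (g x * h x))
        - deriv (fun y => σ y / g y) x *
            (2 * Γ₁ * β * σ x / (β ^ 2 * g x * h x + 4 * m₀ * γ₂))) :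
    ∀ x : ℝ,
      S₁ x = (2 / β ^ 2) * deriv (fun y => 1 / (g y * h y)) x * (σ x ^ 2 / (g x * h x)) ∧
      S₂ x = -(Γ₁ / β) * deriv (fun y => 1 / g y) x * (σ x ^ 2 / (g x * h x)) := by
  intro x
  have hφ' : φ ≠ 0 := ne_of_gt hφ
  -- σ/g is constant 1/φ
  have hσg : (fun y => σ y / g y) = fun _ : ℝ => 1 / φ := by
    funext y
    rw [hg]
    field_simp [hσ y]
  have hσgh : (fun y => σ y / (g y * h y)) = fun y => (1 / φ) * (1 / h y) := by
    funext y
    rw [hg]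
    rw [div_mul_div_comm, one_mul,
      div_eq_div_iff (mul_ne_zero (mul_ne_zero hφ' (hσ y)) (hh y))
        (mul_ne_zero hφ' (hh y))]
    ring
  have hd2 : deriv (fun y => σ y / g y) x = 0 := by
    rw [hσg]; simp
  have hd1 : deriv (fun y => σ y / (g y * h y)) x
      = (1 / φ) * deriv (fun y => 1 / h y) x := by
    rw [hσgh, deriv_const_mul]
    · exact ((differentiable_const (1:ℝ)).div hhd (fun y => hh y)) x
  constructor
  · rw [hS₁]
    simp only
    rw [hd1]
    have hgx : g x = φ * σ x := by rw [hg]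
    have hDx : β ^ 2 * (φ * σ x) * h x + 4 * m₀ * γ₂ ≠ 0 := by
      have := hD x; rwa [hgx] at this
    have hDx' : φ * σ x * h x * β ^ 2 + 4 * m₀ * γ₂ ≠ 0 := by
      rw [show φ * σ x * h x * β ^ 2 = β ^ 2 * (φ * σ x) * h x by ring]; exact hDx
    have key : (1 / φ * deriv (fun y => 1 / h y) x) *
          (4 * σ x / (β ^ 2 * g x * h x + 4 * m₀ * γ₂))
        = deriv (fun y => 1 / h y) x *
          (4 * σ x ^ 2 / (g x * (g x * h x * β ^ 2 + 4 * m₀ * γ₂))) := by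
      rw [hgx]
      generalize deriv (fun y => 1 / h y) x = d
      rw [show φ * σ x * h x * β ^ 2 + 4 * m₀ * γ₂
          = β ^ 2 * (φ * σ x) * h x + 4 * m₀ * γ₂ by ring]
      rw [← mul_div_assoc, ← mul_div_assoc,
        div_eq_div_iff hDx (mul_ne_zero (mul_ne_zero hφ' (hσ x)) hDx)]
      field_simp
    rw [key]
    ring
  · rw [hS₂]
    simp only
    rw [hd2]
    ring
end
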